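/- Let 0 ≤ r₁ < r₂ be real numbers and let (g_i)_{i∈ℕ} be a sequence of measurable functions g_i : ℝ → [0, ∞]. Then there exists ρ ∈ [r₁, r₂] such that (r₂ − r₁) · liminf_{i→∞} g_i(ρ) ≤ 2 · liminf_{i→∞} ∫_{[r₁,r₂]} g_i(t) dt, where the integral is the Lebesgue integral with values in [0, ∞] and the liminfs are taken in [0, ∞]. -/

import Mathlib

open MeasureTheory Filter
open scoped ENNReal Topology

/-- **One-dimensional slicing claim** (core step of Lemma 3.1). For `0 ≤ r₁ < r₂` and a
sequence of measurable functions `g i : ℝ → [0, ∞]`, there exists `ρ ∈ [r₁, r₂]` with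
`(r₂ - r₁) · liminf_i g_i(ρ) ≤ 2 · liminf_i ∫_{[r₁,r₂]} g_i(t) dt`. -/
theorem one_dim_slice (r₁ r₂ : ℝ) (hr₁ : 0 ≤ r₁) (hr₁₂ : r₁ < r₂)
    (g : ℕ → ℝ → ℝ≥0∞) (hmeas : ∀ i, Measurable (g i)) :
    ∃ ρ ∈ Set.Icc r₁ r₂,
      ENNReal.ofReal (r₂ - r₁) * Filter.liminf (fun i => g i ρ) Filter.atTop
        ≤ 2 * Filter.liminf (fun i => ∫⁻ t in Set.Icc r₁ r₂, g i t) Filter.atTop := by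
  set d : ℝ≥0∞ := ENNReal.ofReal (r₂ - r₁) with hd
  set L : ℝ≥0∞ := Filter.liminf (fun i => ∫⁻ t in Set.Icc r₁ r₂, g i t) Filter.atTop with hL
  have hd0 : d ≠ 0 := by
    simp [hd, ENNReal.ofReal_eq_zero, sub_pos, not_le, hr₁₂]
  have hdT : d ≠ ⊤ := ENNReal.ofReal_ne_top
  set F : ℝ → ℝ≥0∞ := fun ρ => Filter.liminf (fun i => g i ρ) Filter.atTop with hF
  have hFmeas : Measurable F := Measurable.liminf fun i => hmeas i
  rcases eq_or_ne L ⊤ with hT | hT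
  · exact ⟨r₁, ⟨le_refl _, le_of_lt hr₁₂⟩, by simp [hT]⟩
  by_contra hcon
  push_neg at hcon
  -- hcon : ∀ ρ ∈ Icc, 2 * L < d * F ρ
  have hfatou : ∫⁻ t in Set.Icc r₁ r₂, F t ≤ L :=
    lintegral_liminf_le fun i => hmeas i
  have hvol : (volume (Set.Icc r₁ r₂)) = d := by
    simp [Real.volume_Icc, hd]
  have hlow : 2 * L * d ≤ d * L := by
    calc 2 * L * d = ∫⁻ _ in Set.Icc r₁ r₂, 2 * L := by
          rw [setLIntegral_const, hvol]
      _ ≤ ∫⁻ t in Set.Icc r₁ r₂, d * F t := by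
          refine setLIntegral_mono (by fun_prop) fun t ht => (hcon t ht).le
      _ = d * ∫⁻ t in Set.Icc r₁ r₂, F t := by
          rw [lintegral_const_mul _ hFmeas]
      _ ≤ d * L := mul_le_mul_right hfatou d
  have hL0 : L = 0 := by
    by_contra hLne
    rw [mul_comm (2 * L) d] at hlow
    have h2 : 2 * L ≤ L := (ENNReal.mul_le_mul_iff_right hd0 hdT).mp hlow
    have : L < 2 * L := by
      rw [two_mul]
      exact ENNReal.lt_add_right hT hLne
    exact absurd h2 (not_le.mpr this)
  have hFzero : ∀ᵐ ρ ∂(volume.restrict (Set.Icc r₁ r₂)), F ρ = 0 := by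
    have h0 : ∫⁻ t in Set.Icc r₁ r₂, F t = 0 := le_antisymm (hL0 ▸ hfatou) zero_le
    have := (lintegral_eq_zero_iff hFmeas).mp h0
    filter_upwards [this] with ρ h using h
  have hmem : ∀ᵐ ρ ∂(volume.restrict (Set.Icc r₁ r₂)), ρ ∈ Set.Icc r₁ r₂ :=
    ae_restrict_mem measurableSet_Icc
  have hne : (volume.restrict (Set.Icc r₁ r₂)) ≠ 0 := by
    intro h
    rw [Measure.restrict_eq_zero, hvol] at h
    exact hd0 h
  haveI : (ae (volume.restrict (Set.Icc r₁ r₂))).NeBot := ae_neBot.mpr hne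
  obtain ⟨ρ, hρ0, hρmem⟩ := (hFzero.and hmem).exists
  have h2 := hcon ρ hρmem
  rw [show Filter.liminf (fun i => g i ρ) Filter.atTop = F ρ from rfl, hρ0, hL0] at h2
  simp at h2
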